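/- Let σ : List B and r ∈ B be such that σ ++ [r] is reduced; set w := π (σ ++ [r]) and t := w * s_r * w⁻¹. Then ℓ(t) + 1 = 2·ℓ(w) holds if and only if the palindromic word σ ++ [r] ++ σ.reverse is reduced. Moreover, in that case t is a left inversion of w, i.e., ℓ(t * w) < ℓ(w). -/
import Mathlib


/-- Let `σ ++ [r]` be reduced, `w := π (σ ++ [r])` and
`t := w * s_r * w⁻¹`. Then `ℓ(t) + 1 = 2ℓ(w)` iff the palindromic word
`σ ++ [r] ++ σ.reverse` is reduced; and in that case `t` is a left inversion
of `w`. -/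
theorem stmt_1 {B : Type*} {W : Type*} [Group W] {M : CoxeterMatrix B}
    (cs : CoxeterSystem M W) (σ : List B) (r : B)
    (hred : cs.IsReduced (σ ++ [r]))
    (w t : W) (hw : w = cs.wordProd (σ ++ [r]))
    (ht : t = w * cs.simple r * w⁻¹) :
    (cs.length t + 1 = 2 * cs.length w ↔ cs.IsReduced (σ ++ [r] ++ σ.reverse)) ∧
    (cs.length t + 1 = 2 * cs.length w → cs.IsLeftInversion w t) := by
  subst hw ht
  have hw' : cs.length (cs.wordProd (σ ++ [r])) = σ.length + 1 := by
    have := hred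
    unfold CoxeterSystem.IsReduced at this
    simpa using this
  have hπ : cs.wordProd (σ ++ [r]) * cs.simple r * (cs.wordProd (σ ++ [r]))⁻¹ =
      cs.wordProd (σ ++ [r] ++ σ.reverse) := by
    rw [cs.wordProd_append (σ ++ [r]) σ.reverse, cs.wordProd_reverse,
      cs.wordProd_append σ [r], cs.wordProd_singleton, mul_inv_rev, cs.inv_simple]
    simp [mul_assoc]
  constructor
  · rw [hπ, hw']
    unfold CoxeterSystem.IsReduced
    constructor
    · intro h
      simp only [List.length_append, List.length_reverse, List.length_singleton]
      omega
    · intro h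
      simp only [List.length_append, List.length_reverse, List.length_singleton] at h
      omega
  · intro _
    constructor
    · exact ⟨cs.wordProd (σ ++ [r]), r, rfl⟩
    · have hmul : cs.wordProd (σ ++ [r]) * cs.simple r * (cs.wordProd (σ ++ [r]))⁻¹ *
          cs.wordProd (σ ++ [r]) = cs.wordProd σ := by
        rw [cs.wordProd_append σ [r], cs.wordProd_singleton]
        group
        rw [mul_assoc, cs.simple_mul_simple_self, mul_one]
      rw [hmul, hw']
      calc cs.length (cs.wordProd σ) ≤ σ.length := cs.length_wordProd_le σ
        _ < σ.length + 1 := Nat.lt_succ_self _
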